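/- Let (X, ‖·‖) be a complex normed space and let x, y ∈ X be linearly independent over ℝ. Then the map Θ: ℝ → ℂ, Θ(t) := ∠(x, y + t·x), is continuous and injective, and lim_{t→−∞} Θ(t) = π and lim_{t→+∞} Θ(t) = 0. -/

import Mathlib

/-- The real area hyperbolic cosine, `arcosh x = log (x + √(x² − 1))`. -/
noncomputable def arcosh (x : ℝ) : ℝ := Real.log (x + Real.sqrt (x ^ 2 - 1))

/-- `G₋ = √((r²+s²−1)² + 4s²) − (r²+s²)` for `z = r + i·s`. -/
noncomputable def Gminus (z : ℂ) : ℝ :=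
  Real.sqrt ((z.re ^ 2 + z.im ^ 2 - 1) ^ 2 + 4 * z.im ^ 2) - (z.re ^ 2 + z.im ^ 2)

/-- `G₊ = √((r²+s²−1)² + 4s²) + (r²+s²)` for `z = r + i·s`. -/
noncomputable def Gplus (z : ℂ) : ℝ :=
  Real.sqrt ((z.re ^ 2 + z.im ^ 2 - 1) ^ 2 + 4 * z.im ^ 2) + (z.re ^ 2 + z.im ^ 2)

/-- The complex arcsine: `arcsin(r+is) = ½·(sgn r · arccos G₋ + i · sgn s · arcosh G₊)`. -/
noncomputable def carcsin (z : ℂ) : ℂ :=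
  (1 / 2 : ℂ) *
    (((Real.sign z.re * Real.arccos (Gminus z) : ℝ) : ℂ) +
      Complex.I * ((Real.sign z.im * arcosh (Gplus z) : ℝ) : ℂ))

/-- The complex arccosine: `arccos z = π/2 − arcsin z`. -/
noncomputable def carccos (z : ℂ) : ℂ := ((Real.pi / 2 : ℝ) : ℂ) - carcsin z
/-- The continuous product `⟨x|y⟩` in a complex normed space. -/
noncomputable def cprod {X : Type*} [NormedAddCommGroup X] [NormedSpace ℂ X] (x y : X) : ℂ :=
  open scoped Classical in
  if x = 0 ∨ y = 0 then 0
  else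
    ((‖x‖ * ‖y‖ : ℝ) : ℂ) * (1 / 4 : ℂ) *
      (((‖((‖x‖⁻¹ : ℝ) : ℂ) • x + ((‖y‖⁻¹ : ℝ) : ℂ) • y‖ ^ 2
          - ‖((‖x‖⁻¹ : ℝ) : ℂ) • x - ((‖y‖⁻¹ : ℝ) : ℂ) • y‖ ^ 2 : ℝ) : ℂ)
        + Complex.I *
          ((‖((‖x‖⁻¹ : ℝ) : ℂ) • x + Complex.I • (((‖y‖⁻¹ : ℝ) : ℂ) • y)‖ ^ 2
            - ‖((‖x‖⁻¹ : ℝ) : ℂ) • x - Complex.I • (((‖y‖⁻¹ : ℝ) : ℂ) • y)‖ ^ 2 : ℝ) : ℂ))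
/-- The complex angle `∠(x,y) = arccos(⟨x|y⟩ / (‖x‖·‖y‖))`. -/
noncomputable def cangle {X : Type*} [NormedAddCommGroup X] [NormedSpace ℂ X] (x y : X) : ℂ :=
  carccos (cprod x y / ((‖x‖ * ‖y‖ : ℝ) : ℂ))


section carcLemmas

lemma abs_real_sign (r : ℝ) : |Real.sign r| ≤ 1 := by
  rcases lt_trichotomy r 0 with h | h | h
  · simp [Real.sign_of_neg h]
  · simp [h, Real.sign_zero]
  · simp [Real.sign_of_pos h]

lemma sqrtE_lower (z : ℂ) :
    |z.re ^ 2 + z.im ^ 2 - 1| ≤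
      Real.sqrt ((z.re ^ 2 + z.im ^ 2 - 1) ^ 2 + 4 * z.im ^ 2) := by
  rw [← Real.sqrt_sq_eq_abs]
  exact Real.sqrt_le_sqrt (by nlinarith [sq_nonneg z.im])

lemma gminus_le_one (z : ℂ) : Gminus z ≤ 1 := by
  have h : Real.sqrt ((z.re ^ 2 + z.im ^ 2 - 1) ^ 2 + 4 * z.im ^ 2)
      ≤ 1 + (z.re ^ 2 + z.im ^ 2) := by
    have h2 : ((z.re ^ 2 + z.im ^ 2 - 1) ^ 2 + 4 * z.im ^ 2)
        ≤ (1 + (z.re ^ 2 + z.im ^ 2)) ^ 2 := by nlinarith [sq_nonneg z.re]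
    calc Real.sqrt ((z.re ^ 2 + z.im ^ 2 - 1) ^ 2 + 4 * z.im ^ 2)
        ≤ Real.sqrt ((1 + (z.re ^ 2 + z.im ^ 2)) ^ 2) := Real.sqrt_le_sqrt h2
      _ = 1 + (z.re ^ 2 + z.im ^ 2) := Real.sqrt_sq (by positivity)
  unfold Gminus; linarith

lemma neg_one_le_gminus (z : ℂ) : -1 ≤ Gminus z := by
  have h1 := sqrtE_lower z
  have h2 := le_abs_self (z.re ^ 2 + z.im ^ 2 - 1)
  unfold Gminus; linarith

lemma one_le_gplus (z : ℂ) : 1 ≤ Gplus z := by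
  have := sqrtE_lower z
  have h := neg_abs_le (z.re ^ 2 + z.im ^ 2 - 1)
  unfold Gplus; linarith

lemma gminus_eq_one_iff (z : ℂ) : Gminus z = 1 ↔ z.re = 0 := by
  constructor
  · intro h
    have h1 : Real.sqrt ((z.re ^ 2 + z.im ^ 2 - 1) ^ 2 + 4 * z.im ^ 2)
        = 1 + (z.re ^ 2 + z.im ^ 2) := by unfold Gminus at h; linarith
    have h2 : ((z.re ^ 2 + z.im ^ 2 - 1) ^ 2 + 4 * z.im ^ 2)
        = (1 + (z.re ^ 2 + z.im ^ 2)) ^ 2 := by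
      have := Real.sq_sqrt (show (0:ℝ) ≤ (z.re ^ 2 + z.im ^ 2 - 1) ^ 2 + 4 * z.im ^ 2 by positivity)
      rw [← this, h1]
    have : z.re ^ 2 = 0 := by nlinarith
    exact pow_eq_zero_iff (n := 2) (by norm_num) |>.mp this
  · intro h
    have h2 : (z.re ^ 2 + z.im ^ 2 - 1) ^ 2 + 4 * z.im ^ 2 = (z.im ^ 2 + 1) ^ 2 := by
      rw [h]; ring
    unfold Gminus
    rw [h2, Real.sqrt_sq (by positivity), h]; ring

lemma gplus_eq_one_of_im_zero (z : ℂ) (h : z.re ^ 2 ≤ 1) (hs : z.im = 0) : Gplus z = 1 := by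
  unfold Gplus
  rw [hs]
  have h2 : (z.re ^ 2 + 0 ^ 2 - 1) ^ 2 + 4 * 0 ^ 2 = (1 - z.re ^ 2) ^ 2 := by ring
  rw [h2, Real.sqrt_sq (by linarith)]; ring

lemma gplus_eq_one_iff (z : ℂ) (h : z.re ^ 2 ≤ 1) : Gplus z = 1 ↔ z.im = 0 := by
  constructor
  · intro hg
    have h1 : Real.sqrt ((z.re ^ 2 + z.im ^ 2 - 1) ^ 2 + 4 * z.im ^ 2)
        = 1 - (z.re ^ 2 + z.im ^ 2) := by unfold Gplus at hg; linarith
    have h2 : ((z.re ^ 2 + z.im ^ 2 - 1) ^ 2 + 4 * z.im ^ 2)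
        = (1 - (z.re ^ 2 + z.im ^ 2)) ^ 2 := by
      have := Real.sq_sqrt (show (0:ℝ) ≤ (z.re ^ 2 + z.im ^ 2 - 1) ^ 2 + 4 * z.im ^ 2 by positivity)
      rw [← this, h1]
    have : z.im ^ 2 = 0 := by nlinarith
    exact pow_eq_zero_iff (n := 2) (by norm_num) |>.mp this
  · exact gplus_eq_one_of_im_zero z h

lemma arcosh_one : arcosh 1 = 0 := by
  unfold arcosh; norm_num

lemma arcosh_nonneg {x : ℝ} (h : 1 ≤ x) : 0 ≤ arcosh x :=
  Real.log_nonneg (by nlinarith [Real.sqrt_nonneg (x ^ 2 - 1)])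

lemma arcosh_eq_zero_iff {x : ℝ} (h : 1 ≤ x) : arcosh x = 0 ↔ x = 1 := by
  constructor
  · intro h0
    by_contra hne
    have hx : 1 < x := lt_of_le_of_ne h (Ne.symm hne)
    have : 0 < arcosh x := Real.log_pos (by nlinarith [Real.sqrt_nonneg (x ^ 2 - 1)])
    linarith
  · intro h1; rw [h1]; exact arcosh_one

lemma arcosh_strictMonoOn : StrictMonoOn arcosh (Set.Ici (1:ℝ)) := by
  intro x hx y hy hxy
  have h1 : (0:ℝ) < x + Real.sqrt (x ^ 2 - 1) := by
    have := Real.sqrt_nonneg (x ^ 2 - 1); simp at hx; linarith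
  apply Real.log_lt_log h1
  have : Real.sqrt (x ^ 2 - 1) ≤ Real.sqrt (y ^ 2 - 1) := by
    apply Real.sqrt_le_sqrt; simp at hx hy; nlinarith
  linarith

lemma arcosh_inj {x y : ℝ} (hx : 1 ≤ x) (hy : 1 ≤ y) (h : arcosh x = arcosh y) : x = y :=
  arcosh_strictMonoOn.injOn hx hy h

lemma continuous_arcosh_aux : Continuous fun x : ℝ => x + Real.sqrt (x ^ 2 - 1) :=
  continuous_id.add (Real.continuous_sqrt.comp ((continuous_pow 2).sub continuous_const))

lemma continuousAt_arcosh {x : ℝ} (h : 1 ≤ x) : ContinuousAt arcosh x := by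
  have hpos : (0:ℝ) < x + Real.sqrt (x ^ 2 - 1) := by
    have := Real.sqrt_nonneg (x ^ 2 - 1); linarith
  exact ContinuousAt.comp (g := Real.log) (f := fun x : ℝ => x + Real.sqrt (x ^ 2 - 1))
    (Real.continuousAt_log (ne_of_gt hpos)) continuous_arcosh_aux.continuousAt

lemma continuous_gminus : Continuous Gminus := by
  unfold Gminus
  apply Continuous.sub
  · exact Real.continuous_sqrt.comp (by fun_prop)
  · fun_prop

lemma continuous_gplus : Continuous Gplus := by
  unfold Gplus
  apply Continuous.add
  · exact Real.continuous_sqrt.comp (by fun_prop)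
  · fun_prop

end carcLemmas

section carcCont

open Filter

lemma carcsin_re (z : ℂ) : (carcsin z).re = Real.sign z.re * Real.arccos (Gminus z) / 2 := by
  unfold carcsin
  simp [Complex.div_re, Complex.mul_re, Complex.mul_im, Complex.add_re, Complex.add_im]
  ring

lemma carcsin_im (z : ℂ) : (carcsin z).im = Real.sign z.im * arcosh (Gplus z) / 2 := by
  unfold carcsin
  simp [Complex.mul_re, Complex.mul_im, Complex.add_re, Complex.add_im]
  ring

lemma continuousAt_signRe_arccos {z₀ : ℂ} :
    ContinuousAt (fun z : ℂ => Real.sign z.re * Real.arccos (Gminus z)) z₀ := by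
  have harc : ContinuousAt (fun z : ℂ => Real.arccos (Gminus z)) z₀ :=
    ContinuousAt.comp (g := Real.arccos) Real.continuous_arccos.continuousAt
      continuous_gminus.continuousAt
  rcases lt_trichotomy z₀.re 0 with hr | hr | hr
  · have hev : ∀ᶠ z : ℂ in nhds z₀, z.re < 0 :=
      (Complex.continuous_re.tendsto z₀).eventually (eventually_lt_nhds hr)
    apply ContinuousAt.congr (f := fun z : ℂ => (-1 : ℝ) * Real.arccos (Gminus z))
    · exact continuousAt_const.mul harc
    · filter_upwards [hev] with z hz
      rw [Real.sign_of_neg hz]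
  · -- z₀.re = 0
    have hval : Real.sign z₀.re * Real.arccos (Gminus z₀) = 0 := by
      rw [hr, Real.sign_zero, zero_mul]
    unfold ContinuousAt
    rw [show (fun z : ℂ => Real.sign z.re * Real.arccos (Gminus z)) z₀ = 0 from hval]
    apply squeeze_zero_norm (a := fun z : ℂ => Real.arccos (Gminus z))
    · intro z
      rw [Real.norm_eq_abs, abs_mul, abs_of_nonneg (Real.arccos_nonneg _)]
      nlinarith [abs_real_sign z.re, abs_nonneg (Real.sign z.re), Real.arccos_nonneg (Gminus z)]
    · have : Real.arccos (Gminus z₀) = 0 := by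
        rw [(gminus_eq_one_iff z₀).mpr hr, Real.arccos_one]
      rw [← this]
      exact harc
  · have hev : ∀ᶠ z : ℂ in nhds z₀, 0 < z.re :=
      (Complex.continuous_re.tendsto z₀).eventually (eventually_gt_nhds hr)
    apply ContinuousAt.congr (f := fun z : ℂ => (1 : ℝ) * Real.arccos (Gminus z))
    · exact continuousAt_const.mul harc
    · filter_upwards [hev] with z hz
      rw [Real.sign_of_pos hz]

lemma continuousAt_signIm_arcosh {z₀ : ℂ} (hre : z₀.re ^ 2 ≤ 1) :
    ContinuousAt (fun z : ℂ => Real.sign z.im * arcosh (Gplus z)) z₀ := by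
  have harc : ContinuousAt (fun z : ℂ => arcosh (Gplus z)) z₀ :=
    ContinuousAt.comp (g := arcosh) (continuousAt_arcosh (one_le_gplus z₀))
      continuous_gplus.continuousAt
  rcases lt_trichotomy z₀.im 0 with hr | hr | hr
  · have hev : ∀ᶠ z : ℂ in nhds z₀, z.im < 0 :=
      (Complex.continuous_im.tendsto z₀).eventually (eventually_lt_nhds hr)
    apply ContinuousAt.congr (f := fun z : ℂ => (-1 : ℝ) * arcosh (Gplus z))
    · exact continuousAt_const.mul harc
    · filter_upwards [hev] with z hz
      rw [Real.sign_of_neg hz]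
  · have hval : Real.sign z₀.im * arcosh (Gplus z₀) = 0 := by
      rw [hr, Real.sign_zero, zero_mul]
    unfold ContinuousAt
    rw [show (fun z : ℂ => Real.sign z.im * arcosh (Gplus z)) z₀ = 0 from hval]
    apply squeeze_zero_norm (a := fun z : ℂ => |arcosh (Gplus z)|)
    · intro z
      rw [Real.norm_eq_abs, abs_mul]
      nlinarith [abs_real_sign z.im, abs_nonneg (Real.sign z.im), abs_nonneg (arcosh (Gplus z))]
    · have hval2 : arcosh (Gplus z₀) = 0 := by
        rw [gplus_eq_one_of_im_zero z₀ hre hr]; exact arcosh_one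
      have h3 := harc.abs
      unfold ContinuousAt at h3
      rw [show (fun z : ℂ => |arcosh (Gplus z)|) z₀ = 0 by simp [hval2]] at h3
      exact h3
  · have hev : ∀ᶠ z : ℂ in nhds z₀, 0 < z.im :=
      (Complex.continuous_im.tendsto z₀).eventually (eventually_gt_nhds hr)
    apply ContinuousAt.congr (f := fun z : ℂ => (1 : ℝ) * arcosh (Gplus z))
    · exact continuousAt_const.mul harc
    · filter_upwards [hev] with z hz
      rw [Real.sign_of_pos hz]

lemma continuousAt_carccos {z₀ : ℂ} (hre : z₀.re ^ 2 ≤ 1) :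
    ContinuousAt carccos z₀ := by
  have h1 := continuousAt_signRe_arccos (z₀ := z₀)
  have h2 := continuousAt_signIm_arcosh hre
  have hsin : ContinuousAt carcsin z₀ := by
    unfold carcsin
    exact continuousAt_const.mul
      ((ContinuousAt.comp (g := fun r : ℝ => (r : ℂ))
          Complex.continuous_ofReal.continuousAt h1).add
        (continuousAt_const.mul (ContinuousAt.comp (g := fun r : ℝ => (r : ℂ))
          Complex.continuous_ofReal.continuousAt h2)))
  unfold carccos
  exact continuousAt_const.sub hsin

lemma carccos_one : carccos 1 = (0 : ℂ) := by
  have hg : Gminus 1 = -1 := by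
    unfold Gminus; norm_num
  have hp : Gplus 1 = 1 := by
    unfold Gplus; norm_num
  unfold carccos carcsin
  rw [hg, hp]
  simp [Real.sign_one, Real.arccos_neg_one, arcosh_one]
  ring

lemma carccos_neg_one : carccos (-1) = ((Real.pi : ℝ) : ℂ) := by
  have hg : Gminus (-1) = -1 := by
    unfold Gminus; norm_num
  have hp : Gplus (-1) = 1 := by
    unfold Gplus; norm_num
  unfold carccos carcsin
  rw [hg, hp]
  have hs : Real.sign (Complex.re (-1)) = -1 := by
    simp [Real.sign_of_neg]
  rw [hs]
  simp [Real.arccos_neg_one, arcosh_one]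
  ring

end carcCont

section carcInj

lemma real_sign_cases (r : ℝ) : Real.sign r = -1 ∨ Real.sign r = 0 ∨ Real.sign r = 1 := by
  rcases lt_trichotomy r 0 with h | h | h
  · exact Or.inl (Real.sign_of_neg h)
  · exact Or.inr (Or.inl (by rw [h]; exact Real.sign_zero))
  · exact Or.inr (Or.inr (Real.sign_of_pos h))

lemma pos_of_real_sign_eq_one {r : ℝ} (h : Real.sign r = 1) : 0 < r := by
  rcases lt_trichotomy r 0 with h' | h' | h'
  · rw [Real.sign_of_neg h'] at h; norm_num at h
  · rw [h', Real.sign_zero] at h; norm_num at h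
  · exact h'

lemma neg_of_real_sign_eq_neg_one {r : ℝ} (h : Real.sign r = -1) : r < 0 := by
  rcases lt_trichotomy r 0 with h' | h' | h'
  · exact h'
  · rw [h', Real.sign_zero] at h; norm_num at h
  · rw [Real.sign_of_pos h'] at h; norm_num at h

lemma gplus_sub_gminus (z : ℂ) : Gplus z - Gminus z = 2 * (z.re ^ 2 + z.im ^ 2) := by
  unfold Gplus Gminus; ring

lemma gplus_add_gminus (z : ℂ) :
    Gplus z + Gminus z
      = 2 * Real.sqrt ((z.re ^ 2 + z.im ^ 2 - 1) ^ 2 + 4 * z.im ^ 2) := by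
  unfold Gplus Gminus; ring

/-- If `carccos z₁ = carccos z₂` on the unit square, then the real parts agree. -/
lemma carccos_det_re {z₁ z₂ : ℂ} (h1r : z₁.re ^ 2 ≤ 1) (h2r : z₂.re ^ 2 ≤ 1)
    (h : carccos z₁ = carccos z₂) : z₁.re = z₂.re := by
  have hsin : carcsin z₁ = carcsin z₂ := by
    unfold carccos at h
    exact sub_right_injective h
  have Ef : Real.sign z₁.re * Real.arccos (Gminus z₁)
      = Real.sign z₂.re * Real.arccos (Gminus z₂) := by
    have h' := congrArg Complex.re hsin
    rw [carcsin_re, carcsin_re] at h'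
    linarith
  have Eg : Real.sign z₁.im * arcosh (Gplus z₁)
      = Real.sign z₂.im * arcosh (Gplus z₂) := by
    have h' := congrArg Complex.im hsin
    rw [carcsin_im, carcsin_im] at h'
    linarith
  -- Step A : Gplus z₁ = Gplus z₂
  have hGp : Gplus z₁ = Gplus z₂ := by
    have harc_of_zero : ∀ w : ℂ, w.re ^ 2 ≤ 1 → w.im = 0 → Gplus w = 1 :=
      fun w hw hw0 => gplus_eq_one_of_im_zero w hw hw0
    by_cases hs1 : z₁.im = 0
    · by_cases hs2 : z₂.im = 0
      · rw [harc_of_zero z₁ h1r hs1, harc_of_zero z₂ h2r hs2]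
      · rw [hs1, Real.sign_zero, zero_mul] at Eg
        rcases Real.sign_apply_eq_of_ne_zero z₂.im hs2 with hsg | hsg <;>
          rw [hsg] at Eg <;>
          [skip; skip] <;>
        · have hz : arcosh (Gplus z₂) = 0 := by linarith
          rw [harc_of_zero z₁ h1r hs1, (arcosh_eq_zero_iff (one_le_gplus z₂)).mp hz]
    · by_cases hs2 : z₂.im = 0
      · rw [hs2, Real.sign_zero, zero_mul] at Eg
        rcases Real.sign_apply_eq_of_ne_zero z₁.im hs1 with hsg | hsg <;>
          rw [hsg] at Eg <;>
          [skip; skip] <;>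
        · have hz : arcosh (Gplus z₁) = 0 := by linarith
          rw [harc_of_zero z₂ h2r hs2, (arcosh_eq_zero_iff (one_le_gplus z₁)).mp hz]
      · have hA := arcosh_nonneg (one_le_gplus z₁)
        have hB := arcosh_nonneg (one_le_gplus z₂)
        have hAB : arcosh (Gplus z₁) = arcosh (Gplus z₂) := by
          rcases Real.sign_apply_eq_of_ne_zero z₁.im hs1 with hg1 | hg1 <;>
            rcases Real.sign_apply_eq_of_ne_zero z₂.im hs2 with hg2 | hg2 <;>
            rw [hg1, hg2] at Eg <;> linarith
        exact arcosh_inj (one_le_gplus z₁) (one_le_gplus z₂) hAB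
  -- Step B : real parts
  by_cases hr1 : z₁.re = 0
  · by_cases hr2 : z₂.re = 0
    · rw [hr1, hr2]
    · exfalso
      rw [hr1, Real.sign_zero, zero_mul] at Ef
      rcases Real.sign_apply_eq_of_ne_zero z₂.re hr2 with hsg | hsg <;>
        rw [hsg] at Ef <;>
      · have hz : Real.arccos (Gminus z₂) = 0 := by linarith
        have hge := Real.arccos_eq_zero.mp hz
        have := gminus_le_one z₂
        exact hr2 ((gminus_eq_one_iff z₂).mp (le_antisymm this hge))
  · by_cases hr2 : z₂.re = 0
    · exfalso
      rw [hr2, Real.sign_zero, zero_mul] at Ef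
      rcases Real.sign_apply_eq_of_ne_zero z₁.re hr1 with hsg | hsg <;>
        rw [hsg] at Ef <;>
      · have hz : Real.arccos (Gminus z₁) = 0 := by linarith
        have hge := Real.arccos_eq_zero.mp hz
        have := gminus_le_one z₁
        exact hr1 ((gminus_eq_one_iff z₁).mp (le_antisymm this hge))
    · -- both real parts nonzero
      have hm1 : Gminus z₁ < 1 :=
        lt_of_le_of_ne (gminus_le_one z₁) (fun hh => hr1 ((gminus_eq_one_iff z₁).mp hh))
      have hm2 : Gminus z₂ < 1 :=
        lt_of_le_of_ne (gminus_le_one z₂) (fun hh => hr2 ((gminus_eq_one_iff z₂).mp hh))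
      have harc1 : 0 < Real.arccos (Gminus z₁) := Real.arccos_pos.mpr hm1
      have harc2 : 0 < Real.arccos (Gminus z₂) := Real.arccos_pos.mpr hm2
      -- signs match and arccos values match
      have hsignEq : Real.sign z₁.re = Real.sign z₂.re ∧
          Real.arccos (Gminus z₁) = Real.arccos (Gminus z₂) := by
        rcases Real.sign_apply_eq_of_ne_zero z₁.re hr1 with hg1 | hg1 <;>
          rcases Real.sign_apply_eq_of_ne_zero z₂.re hr2 with hg2 | hg2 <;>
          rw [hg1, hg2] at Ef <;> rw [hg1, hg2] <;>
          constructor <;> first | rfl | linarith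
      have hGm : Gminus z₁ = Gminus z₂ :=
        Real.arccos_injOn ⟨neg_one_le_gminus z₁, gminus_le_one z₁⟩
          ⟨neg_one_le_gminus z₂, gminus_le_one z₂⟩ hsignEq.2
      -- derive r² equality
      have hq : z₁.re ^ 2 + z₁.im ^ 2 = z₂.re ^ 2 + z₂.im ^ 2 := by
        have d1 := gplus_sub_gminus z₁
        have d2 := gplus_sub_gminus z₂
        rw [hGp, hGm] at d1
        linarith
      have hsqrt : Real.sqrt ((z₁.re ^ 2 + z₁.im ^ 2 - 1) ^ 2 + 4 * z₁.im ^ 2)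
          = Real.sqrt ((z₂.re ^ 2 + z₂.im ^ 2 - 1) ^ 2 + 4 * z₂.im ^ 2) := by
        have a1 := gplus_add_gminus z₁
        have a2 := gplus_add_gminus z₂
        rw [hGp, hGm] at a1
        linarith
      have hE : (z₁.re ^ 2 + z₁.im ^ 2 - 1) ^ 2 + 4 * z₁.im ^ 2
          = (z₂.re ^ 2 + z₂.im ^ 2 - 1) ^ 2 + 4 * z₂.im ^ 2 := by
        have e1 := Real.sq_sqrt (show (0:ℝ) ≤ (z₁.re ^ 2 + z₁.im ^ 2 - 1) ^ 2 + 4 * z₁.im ^ 2 by positivity)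
        have e2 := Real.sq_sqrt (show (0:ℝ) ≤ (z₂.re ^ 2 + z₂.im ^ 2 - 1) ^ 2 + 4 * z₂.im ^ 2 by positivity)
        rw [← e1, ← e2, hsqrt]
      have hs2 : z₁.im ^ 2 = z₂.im ^ 2 := by
        rw [hq] at hE; linarith
      have hr2eq : z₁.re ^ 2 = z₂.re ^ 2 := by linarith
      -- same sign and same square ⟹ equal
      rcases Real.sign_apply_eq_of_ne_zero z₁.re hr1 with hg1 | hg1
      · have hneg1 := neg_of_real_sign_eq_neg_one hg1
        have hg2 : Real.sign z₂.re = -1 := by rw [← hsignEq.1, hg1]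
        have hneg2 := neg_of_real_sign_eq_neg_one hg2
        have hmul : (z₁.re - z₂.re) * (z₁.re + z₂.re) = 0 := by linear_combination hr2eq
        rcases mul_eq_zero.mp hmul with hh | hh
        · linarith
        · exfalso; linarith
      · have hpos1 := pos_of_real_sign_eq_one hg1
        have hg2 : Real.sign z₂.re = 1 := by rw [← hsignEq.1, hg1]
        have hpos2 := pos_of_real_sign_eq_one hg2
        have hmul : (z₁.re - z₂.re) * (z₁.re + z₂.re) = 0 := by linear_combination hr2eq
        rcases mul_eq_zero.mp hmul with hh | hh
        · linarith
        · exfalso; linarith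

end carcInj

section geom

variable {X : Type*} [NormedAddCommGroup X] [NormedSpace ℂ X]

/-- normalized vector -/
noncomputable def nv (x : X) : X := (‖x‖)⁻¹ • x

noncomputable def Af (x y : X) (t : ℝ) : ℝ :=
  ‖nv x + nv (y + t • x)‖ ^ 2 - ‖nv x - nv (y + t • x)‖ ^ 2

noncomputable def Bf (x y : X) (t : ℝ) : ℝ :=
  ‖nv x + Complex.I • nv (y + t • x)‖ ^ 2 - ‖nv x - Complex.I • nv (y + t • x)‖ ^ 2

lemma norm_nv {x : X} (hx : x ≠ 0) : ‖nv x‖ = 1 := by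
  unfold nv
  rw [norm_smul, norm_inv, norm_norm, inv_mul_cancel₀ (norm_ne_zero_iff.mpr hx)]

lemma norm_I_nv {x : X} (hx : x ≠ 0) : ‖Complex.I • nv x‖ = 1 := by
  rw [norm_smul, Complex.norm_I, one_mul, norm_nv hx]

lemma phi_interp (x y : X) {c d w : ℝ} (h1 : c ≤ w) (h2 : w ≤ d) :
    ‖y + w • x‖ * (d - c) ≤ (d - w) * ‖y + c • x‖ + (w - c) * ‖y + d • x‖ := by
  have key : (d - c) • (y + w • x) = (d - w) • (y + c • x) + (w - c) • (y + d • x) := by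
    module
  have h3 := norm_add_le ((d - w) • (y + c • x)) ((w - c) • (y + d • x))
  rw [← key] at h3
  rw [norm_smul, norm_smul, norm_smul, Real.norm_eq_abs, Real.norm_eq_abs, Real.norm_eq_abs,
    abs_of_nonneg (by linarith : (0:ℝ) ≤ d - c), abs_of_nonneg (by linarith : (0:ℝ) ≤ d - w),
    abs_of_nonneg (by linarith : (0:ℝ) ≤ w - c)] at h3
  linarith [h3]

lemma key_plus {x : X} (y : X) (t : ℝ) (hx : x ≠ 0) (hz : y + t • x ≠ 0) :
    ‖y + (t + ‖y + t • x‖ / ‖x‖) • x‖ = ‖y + t • x‖ * ‖nv x + nv (y + t • x)‖ := by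
  set m := ‖y + t • x‖ with hm
  have hm0 : m ≠ 0 := norm_ne_zero_iff.mpr hz
  have hk0 : ‖x‖ ≠ 0 := norm_ne_zero_iff.mpr hx
  have e : y + (t + m / ‖x‖) • x = m • (nv x + nv (y + t • x)) := by
    unfold nv
    rw [smul_add, smul_smul, smul_smul, mul_inv_cancel₀ hm0, one_smul,
      show m * ‖x‖⁻¹ = m / ‖x‖ from (div_eq_mul_inv m ‖x‖).symm, add_smul]
    abel
  rw [e, norm_smul, Real.norm_eq_abs, abs_of_nonneg (norm_nonneg _)]

lemma key_minus {x : X} (y : X) (t : ℝ) (hx : x ≠ 0) (hz : y + t • x ≠ 0) :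
    ‖y + (t - ‖y + t • x‖ / ‖x‖) • x‖ = ‖y + t • x‖ * ‖nv x - nv (y + t • x)‖ := by
  set m := ‖y + t • x‖ with hm
  have hm0 : m ≠ 0 := norm_ne_zero_iff.mpr hz
  have hk0 : ‖x‖ ≠ 0 := norm_ne_zero_iff.mpr hx
  have e : y + (t - m / ‖x‖) • x = m • (nv (y + t • x) - nv x) := by
    unfold nv
    rw [smul_sub, smul_smul, smul_smul, mul_inv_cancel₀ hm0, one_smul,
      show m * ‖x‖⁻¹ = m / ‖x‖ from (div_eq_mul_inv m ‖x‖).symm, sub_smul]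
    abel
  rw [e, norm_smul, Real.norm_eq_abs, abs_of_nonneg (norm_nonneg _), norm_sub_rev]

lemma Af_phi {x : X} (y : X) (t : ℝ) (hx : x ≠ 0) (hz : y + t • x ≠ 0) :
    Af x y t * ‖y + t • x‖ ^ 2
      = ‖y + (t + ‖y + t • x‖ / ‖x‖) • x‖ ^ 2 - ‖y + (t - ‖y + t • x‖ / ‖x‖) • x‖ ^ 2 := by
  rw [key_plus y t hx hz, key_minus y t hx hz]
  unfold Af
  ring

end geom

section inj

variable {X : Type*} [NormedAddCommGroup X] [NormedSpace ℂ X]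

/-- The purely real-arithmetic core of the strict monotonicity argument. -/
lemma real_core {k Δ m₁ m₂ F₁ F₂ G₁ G₂ : ℝ}
    (hk : 0 < k) (hΔ : 0 < Δ) (hm1 : 0 < m₁) (hm2 : 0 < m₂)
    (hF2 : 0 < F₂) (hG1 : 0 < G₁) (hF1 : 0 ≤ F₁) (hG2 : 0 ≤ G₂)
    (hL1 : m₂ - m₁ ≤ Δ * k) (hL2 : m₁ - m₂ ≤ Δ * k)
    (C1 : F₁ * (Δ * k + m₂) ≤ (Δ * k + m₂ - m₁) * m₁ + m₁ * F₂)
    (C2 : m₂ * (Δ * k + m₂) ≤ m₂ * m₁ + Δ * k * F₂)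
    (C3 : G₂ * (Δ * k + m₁) ≤ m₂ * G₁ + (Δ * k + m₁ - m₂) * m₂)
    (C4 : m₁ * (Δ * k + m₁) ≤ Δ * k * G₁ + m₁ * m₂)
    (htri : Δ * k + m₁ + m₂ ≤ F₂ + G₁)
    (hA' : (F₁ ^ 2 - G₁ ^ 2) * m₂ ^ 2 = (F₂ ^ 2 - G₂ ^ 2) * m₁ ^ 2) : False := by
  have hdk : 0 < Δ * k := mul_pos hΔ hk
  have hpos2 : 0 < Δ * k + m₂ := by linarith
  have hpos1 : 0 < Δ * k + m₁ := by linarith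
  have h1m := mul_le_mul_of_nonneg_right C1 hm2.le
  have h2m := mul_le_mul_of_nonneg_right C2 hm1.le
  have h3m := mul_le_mul_of_nonneg_right C3 hm1.le
  have h4m := mul_le_mul_of_nonneg_right C4 hm2.le
  have key1 : 0 ≤ (F₂ * m₁ - F₁ * m₂) * (Δ * k + m₂) := by linarith [h1m, h2m]
  have step1 : F₁ * m₂ ≤ F₂ * m₁ := by
    have := (mul_nonneg_iff_of_pos_right hpos2).mp key1
    linarith
  have key2 : 0 ≤ (G₁ * m₂ - G₂ * m₁) * (Δ * k + m₁) := by linarith [h3m, h4m]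
  have step2 : G₂ * m₁ ≤ G₁ * m₂ := by
    have := (mul_nonneg_iff_of_pos_right hpos1).mp key2
    linarith
  have e : (F₂ * m₁) ^ 2 - (F₁ * m₂) ^ 2 = (G₂ * m₁) ^ 2 - (G₁ * m₂) ^ 2 := by
    linear_combination (-1 : ℝ) * hA'
  have hF1m : 0 ≤ F₁ * m₂ := mul_nonneg hF1 hm2.le
  have hF2m : 0 ≤ F₂ * m₁ := mul_nonneg hF2.le hm1.le
  have hG2m : 0 ≤ G₂ * m₁ := mul_nonneg hG2 hm1.le
  have hG1m : 0 ≤ G₁ * m₂ := mul_nonneg hG1.le hm2.le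
  have d1 : 0 ≤ (F₂ * m₁) ^ 2 - (F₁ * m₂) ^ 2 := by
    have := mul_nonneg (sub_nonneg.mpr step1) (add_nonneg hF1m hF2m)
    linarith [this]
  have d2 : 0 ≤ (G₁ * m₂) ^ 2 - (G₂ * m₁) ^ 2 := by
    have := mul_nonneg (sub_nonneg.mpr step2) (add_nonneg hG2m hG1m)
    linarith [this]
  have hFsq : (F₂ * m₁) ^ 2 = (F₁ * m₂) ^ 2 := by linarith
  have hGsq : (G₂ * m₁) ^ 2 = (G₁ * m₂) ^ 2 := by linarith
  have eqF : F₂ * m₁ = F₁ * m₂ := by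
    have hprod : (F₂ * m₁ - F₁ * m₂) * (F₂ * m₁ + F₁ * m₂) = 0 := by
      linear_combination hFsq
    rcases mul_eq_zero.mp hprod with h | h
    · linarith
    · linarith
  have eqG : G₂ * m₁ = G₁ * m₂ := by
    have hprod : (G₂ * m₁ - G₁ * m₂) * (G₂ * m₁ + G₁ * m₂) = 0 := by
      linear_combination hGsq
    rcases mul_eq_zero.mp hprod with h | h
    · linarith
    · linarith
  have ee1 : F₁ * (Δ * k + m₂) * m₂ = F₂ * m₁ * (Δ * k + m₂) := by
    linear_combination -(Δ * k + m₂) * eqF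
  rw [ee1] at h1m
  have keyE1 : 0 ≤ (m₂ * (Δ * k + m₂ - m₁) - F₂ * (Δ * k)) * m₁ := by linarith [h1m]
  have E1 : F₂ * (Δ * k) = m₂ * (Δ * k + m₂ - m₁) := by
    apply le_antisymm
    · have := (mul_nonneg_iff_of_pos_right hm1).mp keyE1
      linarith
    · linarith [C2]
  have ee2 : G₂ * (Δ * k + m₁) * m₁ = G₁ * m₂ * (Δ * k + m₁) := by
    linear_combination (Δ * k + m₁) * eqG
  rw [ee2] at h3m
  have keyE2 : 0 ≤ (m₁ * (Δ * k + m₁ - m₂) - G₁ * (Δ * k)) * m₂ := by linarith [h3m]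
  have E2 : G₁ * (Δ * k) = m₁ * (Δ * k + m₁ - m₂) := by
    apply le_antisymm
    · have := (mul_nonneg_iff_of_pos_right hm2).mp keyE2
      linarith
    · linarith [C4]
  have hsum : F₂ * (Δ * k) + G₁ * (Δ * k) = (m₁ + m₂) * (Δ * k) + (m₂ - m₁) ^ 2 := by
    linear_combination E1 + E2
  have htri2 := mul_le_mul_of_nonneg_right htri hdk.le
  have hLs : (Δ * k) ^ 2 ≤ (m₂ - m₁) ^ 2 := by linarith [htri2, hsum]
  have hzero : (m₂ - m₁ - Δ * k) * (m₂ - m₁ + Δ * k) = 0 := by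
    apply le_antisymm
    · have := mul_nonneg (by linarith : (0:ℝ) ≤ Δ * k - (m₂ - m₁))
        (by linarith : (0:ℝ) ≤ m₂ - m₁ + Δ * k)
      linarith [this]
    · linarith [hLs]
  rcases mul_eq_zero.mp hzero with hc | hc
  · have hGz : G₁ * (Δ * k) = 0 := by
      rw [E2]; linear_combination (-m₁) * hc
    rcases mul_eq_zero.mp hGz with h | h
    · linarith
    · linarith
  · have hFz : F₂ * (Δ * k) = 0 := by
      rw [E1]; linear_combination m₂ * hc
    rcases mul_eq_zero.mp hFz with h | h
    · linarith
    · linarith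

end inj

section inj2

variable {X : Type*} [NormedAddCommGroup X] [NormedSpace ℂ X]

lemma le_of_scaled {p q k : ℝ} (hk : 0 < k) (h : 0 ≤ (q - p) * k) : p ≤ q := by
  have := (mul_nonneg_iff_of_pos_right hk).mp h
  linarith

lemma phi_interp_scaled (x y : X) {c d w : ℝ} (h1 : c ≤ w) (h2 : w ≤ d)
    {k A B C : ℝ} (hk : 0 < k)
    (eA : (d - c) * k = A) (eB : (d - w) * k = B) (eC : (w - c) * k = C) :
    ‖y + w • x‖ * A ≤ B * ‖y + c • x‖ + C * ‖y + d • x‖ := by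
  have h := phi_interp x y h1 h2
  have h' := mul_le_mul_of_nonneg_right h hk.le
  calc ‖y + w • x‖ * A = ‖y + w • x‖ * (d - c) * k := by rw [← eA]; ring
    _ ≤ ((d - w) * ‖y + c • x‖ + (w - c) * ‖y + d • x‖) * k := h'
    _ = B * ‖y + c • x‖ + C * ‖y + d • x‖ := by rw [← eB, ← eC]; ring

lemma Af_inj {x y : X} (hx : x ≠ 0) (hz : ∀ t : ℝ, y + t • x ≠ 0)
    {t₁ t₂ : ℝ} (hlt : t₁ < t₂) (hA : Af x y t₁ = Af x y t₂) : False := by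
  have hk : 0 < ‖x‖ := norm_pos_iff.mpr hx
  have hkne : ‖x‖ ≠ 0 := ne_of_gt hk
  have hm1 : 0 < ‖y + t₁ • x‖ := norm_pos_iff.mpr (hz t₁)
  have hm2 : 0 < ‖y + t₂ • x‖ := norm_pos_iff.mpr (hz t₂)
  have hΔ : 0 < t₂ - t₁ := sub_pos.mpr hlt
  have hF2 : 0 < ‖y + (t₂ + ‖y + t₂ • x‖ / ‖x‖) • x‖ := norm_pos_iff.mpr (hz _)
  have hG1 : 0 < ‖y + (t₁ - ‖y + t₁ • x‖ / ‖x‖) • x‖ := norm_pos_iff.mpr (hz _)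
  -- Lipschitz bounds
  have hL1 : ‖y + t₂ • x‖ - ‖y + t₁ • x‖ ≤ (t₂ - t₁) * ‖x‖ := by
    have h := norm_sub_norm_le (y + t₂ • x) (y + t₁ • x)
    have e : (y + t₂ • x) - (y + t₁ • x) = (t₂ - t₁) • x := by module
    rw [e, norm_smul, Real.norm_eq_abs, abs_of_pos hΔ] at h
    exact h
  have hL2 : ‖y + t₁ • x‖ - ‖y + t₂ • x‖ ≤ (t₂ - t₁) * ‖x‖ := by
    have h := norm_sub_norm_le (y + t₁ • x) (y + t₂ • x)
    have e : (y + t₁ • x) - (y + t₂ • x) = (t₁ - t₂) • x := by module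
    rw [e, norm_smul, Real.norm_eq_abs, abs_of_neg (by linarith : t₁ - t₂ < 0)] at h
    calc ‖y + t₁ • x‖ - ‖y + t₂ • x‖ ≤ -(t₁ - t₂) * ‖x‖ := h
      _ = (t₂ - t₁) * ‖x‖ := by ring
  -- point orderings
  have hord1 : t₁ ≤ t₁ + ‖y + t₁ • x‖ / ‖x‖ := by
    have : 0 ≤ ‖y + t₁ • x‖ / ‖x‖ := by positivity
    linarith
  have hord2 : t₁ + ‖y + t₁ • x‖ / ‖x‖ ≤ t₂ + ‖y + t₂ • x‖ / ‖x‖ := by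
    apply le_of_scaled hk
    have e : (t₂ + ‖y + t₂ • x‖ / ‖x‖ - (t₁ + ‖y + t₁ • x‖ / ‖x‖)) * ‖x‖
        = (t₂ - t₁) * ‖x‖ + ‖y + t₂ • x‖ - ‖y + t₁ • x‖ := by
      field_simp
      ring
    rw [e]; linarith
  have hord3 : t₂ ≤ t₂ + ‖y + t₂ • x‖ / ‖x‖ := by
    have : 0 ≤ ‖y + t₂ • x‖ / ‖x‖ := by positivity
    linarith
  have hord4 : t₁ - ‖y + t₁ • x‖ / ‖x‖ ≤ t₂ - ‖y + t₂ • x‖ / ‖x‖ := by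
    apply le_of_scaled hk
    have e : (t₂ - ‖y + t₂ • x‖ / ‖x‖ - (t₁ - ‖y + t₁ • x‖ / ‖x‖)) * ‖x‖
        = (t₂ - t₁) * ‖x‖ + ‖y + t₁ • x‖ - ‖y + t₂ • x‖ := by
      field_simp
      ring
    rw [e]; linarith
  have hord5 : t₂ - ‖y + t₂ • x‖ / ‖x‖ ≤ t₂ := by
    have : 0 ≤ ‖y + t₂ • x‖ / ‖x‖ := by positivity
    linarith
  have hord6 : t₁ - ‖y + t₁ • x‖ / ‖x‖ ≤ t₁ := by
    have : 0 ≤ ‖y + t₁ • x‖ / ‖x‖ := by positivity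
    linarith
  -- the four convexity inequalities
  have C1 : ‖y + (t₁ + ‖y + t₁ • x‖ / ‖x‖) • x‖ * ((t₂ - t₁) * ‖x‖ + ‖y + t₂ • x‖)
      ≤ ((t₂ - t₁) * ‖x‖ + ‖y + t₂ • x‖ - ‖y + t₁ • x‖) * ‖y + t₁ • x‖
        + ‖y + t₁ • x‖ * ‖y + (t₂ + ‖y + t₂ • x‖ / ‖x‖) • x‖ :=
    phi_interp_scaled x y hord1 hord2 hk
      (by field_simp; try ring) (by field_simp; try ring) (by field_simp; try ring)
  have C2 : ‖y + t₂ • x‖ * ((t₂ - t₁) * ‖x‖ + ‖y + t₂ • x‖)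
      ≤ ‖y + t₂ • x‖ * ‖y + t₁ • x‖
        + (t₂ - t₁) * ‖x‖ * ‖y + (t₂ + ‖y + t₂ • x‖ / ‖x‖) • x‖ := by
    have h := phi_interp_scaled x y (le_of_lt hlt) hord3 hk
      (A := (t₂ - t₁) * ‖x‖ + ‖y + t₂ • x‖) (B := ‖y + t₂ • x‖) (C := (t₂ - t₁) * ‖x‖)
      (by field_simp; try ring) (by field_simp; try ring) (by ring)
    linarith [h]
  have C3 : ‖y + (t₂ - ‖y + t₂ • x‖ / ‖x‖) • x‖ * ((t₂ - t₁) * ‖x‖ + ‖y + t₁ • x‖)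
      ≤ ‖y + t₂ • x‖ * ‖y + (t₁ - ‖y + t₁ • x‖ / ‖x‖) • x‖
        + ((t₂ - t₁) * ‖x‖ + ‖y + t₁ • x‖ - ‖y + t₂ • x‖) * ‖y + t₂ • x‖ := by
    have h := phi_interp_scaled x y hord4 hord5 hk
      (A := (t₂ - t₁) * ‖x‖ + ‖y + t₁ • x‖) (B := ‖y + t₂ • x‖)
      (C := (t₂ - t₁) * ‖x‖ + ‖y + t₁ • x‖ - ‖y + t₂ • x‖)
      (by field_simp; try ring) (by field_simp; try ring) (by field_simp; try ring)
    linarith [h]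
  have C4 : ‖y + t₁ • x‖ * ((t₂ - t₁) * ‖x‖ + ‖y + t₁ • x‖)
      ≤ (t₂ - t₁) * ‖x‖ * ‖y + (t₁ - ‖y + t₁ • x‖ / ‖x‖) • x‖
        + ‖y + t₁ • x‖ * ‖y + t₂ • x‖ := by
    have h := phi_interp_scaled x y hord6 (le_of_lt hlt) hk
      (A := (t₂ - t₁) * ‖x‖ + ‖y + t₁ • x‖) (B := (t₂ - t₁) * ‖x‖)
      (C := ‖y + t₁ • x‖)
      (by field_simp; try ring) (by ring) (by field_simp; try ring)
    linarith [h]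
  -- triangle inequality
  have htri : (t₂ - t₁) * ‖x‖ + ‖y + t₁ • x‖ + ‖y + t₂ • x‖
      ≤ ‖y + (t₂ + ‖y + t₂ • x‖ / ‖x‖) • x‖ + ‖y + (t₁ - ‖y + t₁ • x‖ / ‖x‖) • x‖ := by
    have h := norm_sub_le (y + (t₂ + ‖y + t₂ • x‖ / ‖x‖) • x) (y + (t₁ - ‖y + t₁ • x‖ / ‖x‖) • x)
    have e : (y + (t₂ + ‖y + t₂ • x‖ / ‖x‖) • x) - (y + (t₁ - ‖y + t₁ • x‖ / ‖x‖) • x)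
        = ((t₂ + ‖y + t₂ • x‖ / ‖x‖) - (t₁ - ‖y + t₁ • x‖ / ‖x‖)) • x := by module
    have hdpos : 0 < (t₂ + ‖y + t₂ • x‖ / ‖x‖) - (t₁ - ‖y + t₁ • x‖ / ‖x‖) := by
      have h1 : 0 < ‖y + t₁ • x‖ / ‖x‖ := by positivity
      have h2 : 0 < ‖y + t₂ • x‖ / ‖x‖ := by positivity
      linarith
    rw [e, norm_smul, Real.norm_eq_abs, abs_of_pos hdpos] at h
    have e2 : ((t₂ + ‖y + t₂ • x‖ / ‖x‖) - (t₁ - ‖y + t₁ • x‖ / ‖x‖)) * ‖x‖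
        = (t₂ - t₁) * ‖x‖ + ‖y + t₁ • x‖ + ‖y + t₂ • x‖ := by
      field_simp
      ring
    rw [e2] at h
    exact h
  -- the A-quantity identity
  have p1 := Af_phi y t₁ hx (hz t₁)
  have p2 := Af_phi y t₂ hx (hz t₂)
  have hA' : (‖y + (t₁ + ‖y + t₁ • x‖ / ‖x‖) • x‖ ^ 2
        - ‖y + (t₁ - ‖y + t₁ • x‖ / ‖x‖) • x‖ ^ 2) * ‖y + t₂ • x‖ ^ 2
      = (‖y + (t₂ + ‖y + t₂ • x‖ / ‖x‖) • x‖ ^ 2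
        - ‖y + (t₂ - ‖y + t₂ • x‖ / ‖x‖) • x‖ ^ 2) * ‖y + t₁ • x‖ ^ 2 := by
    linear_combination (-(‖y + t₂ • x‖ ^ 2)) * p1 + (‖y + t₁ • x‖ ^ 2) * p2
      + (‖y + t₁ • x‖ ^ 2 * ‖y + t₂ • x‖ ^ 2) * hA
  exact real_core hk hΔ hm1 hm2 hF2 hG1 (norm_nonneg _) (norm_nonneg _)
    hL1 hL2 C1 C2 C3 C4 htri hA'

end inj2

section assemble

open Filter

variable {X : Type*} [NormedAddCommGroup X] [NormedSpace ℂ X]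

lemma cangle_eq {x : X} (y : X) (t : ℝ) (hx : x ≠ 0) (hz : y + t • x ≠ 0) :
    cangle x (y + (t : ℂ) • x)
      = carccos ((((Af x y t) / 4 : ℝ) : ℂ) + Complex.I * (((Bf x y t) / 4 : ℝ) : ℂ)) := by
  have hsm : (t : ℂ) • x = t • x := Complex.coe_smul t x
  have hc : ((‖x‖ * ‖y + t • x‖ : ℝ) : ℂ) ≠ 0 := by
    rw [Complex.ofReal_ne_zero]
    exact mul_ne_zero (norm_ne_zero_iff.mpr hx) (norm_ne_zero_iff.mpr hz)
  unfold cangle cprod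
  rw [hsm, if_neg (by push_neg; exact ⟨hx, hz⟩)]
  simp only [Complex.coe_smul]
  congr 1
  rw [div_eq_iff hc]
  unfold Af Bf nv
  push_cast
  ring
end assemble

section assemble2

open Filter

variable {X : Type*} [NormedAddCommGroup X] [NormedSpace ℂ X]

lemma Af_sq_le {x : X} (y : X) (t : ℝ) (hx : x ≠ 0) (hz : y + t • x ≠ 0) :
    (Af x y t / 4) ^ 2 ≤ 1 := by
  have h1 : ‖nv x + nv (y + t • x)‖ ≤ 2 := by
    calc ‖nv x + nv (y + t • x)‖ ≤ ‖nv x‖ + ‖nv (y + t • x)‖ := norm_add_le _ _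
      _ = 2 := by rw [norm_nv hx, norm_nv hz]; norm_num
  have h2 : ‖nv x - nv (y + t • x)‖ ≤ 2 := by
    calc ‖nv x - nv (y + t • x)‖ ≤ ‖nv x‖ + ‖nv (y + t • x)‖ := norm_sub_le _ _
      _ = 2 := by rw [norm_nv hx, norm_nv hz]; norm_num
  have h3 := norm_nonneg (nv x + nv (y + t • x))
  have h4 := norm_nonneg (nv x - nv (y + t • x))
  have h5 : ‖nv x + nv (y + t • x)‖ ^ 2 ≤ 4 := by nlinarith [h1, h3]
  have h6 : ‖nv x - nv (y + t • x)‖ ^ 2 ≤ 4 := by nlinarith [h2, h4]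
  have h7 : 0 ≤ ‖nv x + nv (y + t • x)‖ ^ 2 := sq_nonneg _
  have h8 : 0 ≤ ‖nv x - nv (y + t • x)‖ ^ 2 := sq_nonneg _
  have h9 : 0 ≤ (4 - (‖nv x + nv (y + t • x)‖ ^ 2 - ‖nv x - nv (y + t • x)‖ ^ 2)) *
      (4 + (‖nv x + nv (y + t • x)‖ ^ 2 - ‖nv x - nv (y + t • x)‖ ^ 2)) :=
    mul_nonneg (by linarith) (by linarith)
  unfold Af
  nlinarith [h9]

lemma continuous_z (x y : X) : Continuous fun t : ℝ => y + t • x :=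
  continuous_const.add (continuous_id.smul continuous_const)

lemma continuous_nvz {x y : X} (hz : ∀ t : ℝ, y + t • x ≠ 0) :
    Continuous fun t : ℝ => nv (y + t • x) := by
  unfold nv
  exact ((continuous_z x y).norm.inv₀
    (fun t => norm_ne_zero_iff.mpr (hz t))).smul (continuous_z x y)

lemma continuous_Af {x y : X} (hz : ∀ t : ℝ, y + t • x ≠ 0) :
    Continuous fun t : ℝ => Af x y t := by
  unfold Af
  exact (((continuous_const.add (continuous_nvz hz)).norm.pow 2)).sub
    (((continuous_const.sub (continuous_nvz hz)).norm.pow 2))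

lemma continuous_Bf {x y : X} (hz : ∀ t : ℝ, y + t • x ≠ 0) :
    Continuous fun t : ℝ => Bf x y t := by
  unfold Bf
  have hIc : Continuous fun t : ℝ => Complex.I • nv (y + t • x) :=
    (continuous_nvz hz).const_smul Complex.I
  exact (((continuous_const.add hIc).norm.pow 2)).sub
    (((continuous_const.sub hIc).norm.pow 2))

lemma continuous_P {x y : X} (hz : ∀ t : ℝ, y + t • x ≠ 0) :
    Continuous fun t : ℝ =>
      (((Af x y t) / 4 : ℝ) : ℂ) + Complex.I * (((Bf x y t) / 4 : ℝ) : ℂ) :=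
  (Complex.continuous_ofReal.comp ((continuous_Af hz).div_const 4)).add
    (continuous_const.mul
      (Complex.continuous_ofReal.comp ((continuous_Bf hz).div_const 4)))

end assemble2

section limits

open Filter

variable {X : Type*} [NormedAddCommGroup X] [NormedSpace ℂ X]

lemma norm_one_add_I_sq : ‖((1:ℂ) + Complex.I)‖ ^ 2 = 2 := by
  rw [Complex.sq_norm]
  simp [Complex.normSq_apply]
  norm_num

lemma norm_one_sub_I_sq : ‖((1:ℂ) - Complex.I)‖ ^ 2 = 2 := by
  rw [Complex.sq_norm]
  simp [Complex.normSq_apply]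
  norm_num

lemma nv_tendsto_atTop {x y : X} (hx : x ≠ 0) (hz : ∀ t : ℝ, y + t • x ≠ 0) :
    Tendsto (fun t : ℝ => nv (y + t • x)) atTop (nhds (nv x)) := by
  have hxn : ‖x‖ ≠ 0 := norm_ne_zero_iff.mpr hx
  have hlim1 : Tendsto (fun t : ℝ => t⁻¹ • y + x) atTop (nhds x) := by
    have h0 : Tendsto (fun t : ℝ => t⁻¹) atTop (nhds (0:ℝ)) := tendsto_inv_atTop_zero
    have h1 := h0.smul_const y
    rw [zero_smul] at h1
    have h2 := h1.add_const x
    rwa [zero_add] at h2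
  have hnorm := hlim1.norm
  have hscal := hnorm.inv₀ hxn
  have hmain := hscal.smul hlim1
  unfold nv
  apply Tendsto.congr' _ hmain
  filter_upwards [eventually_ge_atTop (1:ℝ)] with t ht
  have ht0 : (0:ℝ) < t := by linarith
  have htne : t ≠ 0 := ne_of_gt ht0
  have hmne : ‖y + t • x‖ ≠ 0 := norm_ne_zero_iff.mpr (hz t)
  have e : t⁻¹ • (y + t • x) = t⁻¹ • y + x := by
    rw [smul_add, smul_smul, inv_mul_cancel₀ htne, one_smul]
  rw [← e, norm_smul, Real.norm_eq_abs, abs_of_pos (inv_pos.mpr ht0), smul_smul]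
  congr 1
  field_simp

lemma nv_tendsto_atBot {x y : X} (hx : x ≠ 0) (hz : ∀ t : ℝ, y + t • x ≠ 0) :
    Tendsto (fun t : ℝ => nv (y + t • x)) atBot (nhds (-(nv x))) := by
  have hxn : ‖x‖ ≠ 0 := norm_ne_zero_iff.mpr hx
  have h0 : Tendsto (fun t : ℝ => t⁻¹) atBot (nhds (0:ℝ)) := by
    have h := (tendsto_inv_atTop_zero (𝕜 := ℝ)).comp tendsto_neg_atBot_atTop
    have h2 := h.neg
    rw [neg_zero] at h2
    apply h2.congr
    intro t
    simp [inv_neg]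
  have hlim1 : Tendsto (fun t : ℝ => t⁻¹ • y + x) atBot (nhds x) := by
    have h1 := h0.smul_const y
    rw [zero_smul] at h1
    have h2 := h1.add_const x
    rwa [zero_add] at h2
  have hnorm := hlim1.norm
  have hscal := hnorm.inv₀ hxn
  have hmain := (hscal.smul hlim1).neg
  unfold nv
  apply Tendsto.congr' _ hmain
  filter_upwards [eventually_le_atBot (-1:ℝ)] with t ht
  have ht0 : t < 0 := by linarith
  have htne : t ≠ 0 := ne_of_lt ht0
  have hmne : ‖y + t • x‖ ≠ 0 := norm_ne_zero_iff.mpr (hz t)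
  have e : t⁻¹ • (y + t • x) = t⁻¹ • y + x := by
    rw [smul_add, smul_smul, inv_mul_cancel₀ htne, one_smul]
  rw [← e, norm_smul, Real.norm_eq_abs, abs_of_neg (inv_lt_zero.mpr ht0), smul_smul, ← neg_smul]
  congr 1
  field_simp
end limits

section final

open Filter

variable {X : Type*} [NormedAddCommGroup X] [NormedSpace ℂ X]

lemma Af_tendsto_atTop {x y : X} (hx : x ≠ 0) (hz : ∀ t : ℝ, y + t • x ≠ 0) :
    Tendsto (fun t : ℝ => Af x y t) atTop (nhds 4) := by
  have h := nv_tendsto_atTop hx hz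
  have h1 := ((h.const_add (nv x)).norm.pow 2)
  have h2 := ((h.const_sub (nv x)).norm.pow 2)
  have h3 := h1.sub h2
  have hval : ‖nv x + nv x‖ ^ 2 - ‖nv x - nv x‖ ^ 2 = 4 := by
    rw [sub_self, norm_zero, ← two_smul ℝ, norm_smul, Real.norm_eq_abs, norm_nv hx]
    norm_num
  unfold Af
  rw [show (4:ℝ) = ‖nv x + nv x‖ ^ 2 - ‖nv x - nv x‖ ^ 2 from hval.symm]
  exact h3

lemma Bf_tendsto_atTop {x y : X} (hx : x ≠ 0) (hz : ∀ t : ℝ, y + t • x ≠ 0) :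
    Tendsto (fun t : ℝ => Bf x y t) atTop (nhds 0) := by
  have h := (nv_tendsto_atTop hx hz).const_smul (Complex.I)
  have h1 := ((h.const_add (nv x)).norm.pow 2)
  have h2 := ((h.const_sub (nv x)).norm.pow 2)
  have h3 := h1.sub h2
  have e1 : nv x + Complex.I • nv x = ((1:ℂ) + Complex.I) • nv x := by
    rw [add_smul, one_smul]
  have e2 : nv x - Complex.I • nv x = ((1:ℂ) - Complex.I) • nv x := by
    rw [sub_smul, one_smul]
  have hval : ‖nv x + Complex.I • nv x‖ ^ 2 - ‖nv x - Complex.I • nv x‖ ^ 2 = 0 := by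
    rw [e1, e2, norm_smul, norm_smul, norm_nv hx, mul_one, mul_one,
      norm_one_add_I_sq, norm_one_sub_I_sq, sub_self]
  unfold Bf
  rw [show (0:ℝ) = ‖nv x + Complex.I • nv x‖ ^ 2 - ‖nv x - Complex.I • nv x‖ ^ 2 from hval.symm]
  exact h3

lemma Af_tendsto_atBot {x y : X} (hx : x ≠ 0) (hz : ∀ t : ℝ, y + t • x ≠ 0) :
    Tendsto (fun t : ℝ => Af x y t) atBot (nhds (-4)) := by
  have h := nv_tendsto_atBot hx hz
  have h1 := ((h.const_add (nv x)).norm.pow 2)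
  have h2 := ((h.const_sub (nv x)).norm.pow 2)
  have h3 := h1.sub h2
  have hval : ‖nv x + -nv x‖ ^ 2 - ‖nv x - -nv x‖ ^ 2 = -4 := by
    rw [add_neg_cancel, norm_zero, sub_neg_eq_add, ← two_smul ℝ, norm_smul,
      Real.norm_eq_abs, norm_nv hx]
    norm_num
  unfold Af
  rw [show (-4:ℝ) = ‖nv x + -nv x‖ ^ 2 - ‖nv x - -nv x‖ ^ 2 from hval.symm]
  exact h3

lemma Bf_tendsto_atBot {x y : X} (hx : x ≠ 0) (hz : ∀ t : ℝ, y + t • x ≠ 0) :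
    Tendsto (fun t : ℝ => Bf x y t) atBot (nhds 0) := by
  have h := (nv_tendsto_atBot hx hz).const_smul (Complex.I)
  have h1 := ((h.const_add (nv x)).norm.pow 2)
  have h2 := ((h.const_sub (nv x)).norm.pow 2)
  have h3 := h1.sub h2
  have e1 : nv x + Complex.I • -nv x = ((1:ℂ) - Complex.I) • nv x := by
    rw [sub_smul, one_smul, smul_neg]
    abel
  have e2 : nv x - Complex.I • -nv x = ((1:ℂ) + Complex.I) • nv x := by
    rw [add_smul, one_smul, smul_neg]
    abel
  have hval : ‖nv x + Complex.I • -nv x‖ ^ 2 - ‖nv x - Complex.I • -nv x‖ ^ 2 = 0 := by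
    rw [e1, e2, norm_smul, norm_smul, norm_nv hx, mul_one, mul_one,
      norm_one_add_I_sq, norm_one_sub_I_sq, sub_self]
  unfold Bf
  rw [show (0:ℝ) = ‖nv x + Complex.I • -nv x‖ ^ 2 - ‖nv x - Complex.I • -nv x‖ ^ 2 from hval.symm]
  exact h3

end final

theorem stmt11' {X : Type*} [NormedAddCommGroup X] [NormedSpace ℂ X] (x y : X)
    (hind : LinearIndependent ℝ ![x, y]) :
    Continuous (fun t : ℝ => cangle x (y + (t : ℂ) • x)) ∧
    Function.Injective (fun t : ℝ => cangle x (y + (t : ℂ) • x)) ∧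
    Filter.Tendsto (fun t : ℝ => cangle x (y + (t : ℂ) • x)) Filter.atBot
      (nhds ((Real.pi : ℝ) : ℂ)) ∧
    Filter.Tendsto (fun t : ℝ => cangle x (y + (t : ℂ) • x)) Filter.atTop (nhds 0) := by
  have hx : x ≠ 0 := by simpa using hind.ne_zero 0
  have hy : y ≠ 0 := by simpa using hind.ne_zero 1
  have hfin := linearIndependent_fin2.mp hind
  have hz : ∀ t : ℝ, y + t • x ≠ 0 := by
    intro t h
    by_cases ht : t = 0
    · apply hy
      rw [ht] at h
      simpa using h
    · have hyx : y = -(t • x) := eq_neg_of_add_eq_zero_left h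
      have hxy : (-t⁻¹) • y = x := by
        rw [hyx, smul_neg, neg_smul, neg_neg, smul_smul, inv_mul_cancel₀ ht, one_smul]
      have := hfin.2 (-t⁻¹)
      apply this
      simpa using hxy
  have hcang : ∀ t : ℝ, cangle x (y + (t : ℂ) • x)
      = carccos ((((Af x y t) / 4 : ℝ) : ℂ) + Complex.I * (((Bf x y t) / 4 : ℝ) : ℂ)) :=
    fun t => cangle_eq y t hx (hz t)
  have hre : ∀ t : ℝ,
      (((((Af x y t) / 4 : ℝ) : ℂ) + Complex.I * (((Bf x y t) / 4 : ℝ) : ℂ))).re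
        = Af x y t / 4 := by
    intro t
    simp
  have hresq : ∀ t : ℝ,
      (((((Af x y t) / 4 : ℝ) : ℂ) + Complex.I * (((Bf x y t) / 4 : ℝ) : ℂ))).re ^ 2 ≤ 1 := by
    intro t
    rw [hre t]
    exact Af_sq_le y t hx (hz t)
  have hfun : (fun t : ℝ => cangle x (y + (t : ℂ) • x))
      = fun t : ℝ => carccos ((((Af x y t) / 4 : ℝ) : ℂ)
          + Complex.I * (((Bf x y t) / 4 : ℝ) : ℂ)) := funext hcang
  refine ⟨?_, ?_, ?_, ?_⟩
  · rw [hfun, continuous_iff_continuousAt]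
    intro t
    exact ContinuousAt.comp (g := carccos)
      (f := fun t : ℝ => (((Af x y t) / 4 : ℝ) : ℂ) + Complex.I * (((Bf x y t) / 4 : ℝ) : ℂ))
      (continuousAt_carccos (hresq t)) (continuous_P hz).continuousAt
  · intro t₁ t₂ h
    simp only [hcang t₁, hcang t₂] at h
    have hre_eq := carccos_det_re (hresq t₁) (hresq t₂) h
    rw [hre t₁, hre t₂] at hre_eq
    have hAe : Af x y t₁ = Af x y t₂ := by linarith
    rcases lt_trichotomy t₁ t₂ with hlt | he | hlt
    · exact (Af_inj hx hz hlt hAe).elim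
    · exact he
    · exact (Af_inj hx hz hlt hAe.symm).elim
  · rw [hfun]
    have hPB : Filter.Tendsto (fun t : ℝ => (((Af x y t) / 4 : ℝ) : ℂ)
        + Complex.I * (((Bf x y t) / 4 : ℝ) : ℂ)) Filter.atBot (nhds (-1)) := by
      have hA := ((Af_tendsto_atBot hx hz).div_const 4)
      have hB := ((Bf_tendsto_atBot hx hz).div_const 4)
      have h := ((Complex.continuous_ofReal.tendsto _).comp hA).add
        ((tendsto_const_nhds (x := Complex.I) (f := Filter.atBot)).mul
          ((Complex.continuous_ofReal.tendsto _).comp hB))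
      have hval : ((((-4:ℝ)) / 4 : ℝ) : ℂ) + Complex.I * ((((0:ℝ)) / 4 : ℝ) : ℂ) = -1 := by
        norm_num
      rwa [hval] at h
    have hcarc : Filter.Tendsto carccos (nhds (-1)) (nhds ((Real.pi : ℝ) : ℂ)) := by
      have h := continuousAt_carccos (z₀ := (-1 : ℂ)) (by norm_num)
      unfold ContinuousAt at h
      rwa [carccos_neg_one] at h
    exact hcarc.comp hPB
  · rw [hfun]
    have hPT : Filter.Tendsto (fun t : ℝ => (((Af x y t) / 4 : ℝ) : ℂ)
        + Complex.I * (((Bf x y t) / 4 : ℝ) : ℂ)) Filter.atTop (nhds 1) := by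
      have hA := ((Af_tendsto_atTop hx hz).div_const 4)
      have hB := ((Bf_tendsto_atTop hx hz).div_const 4)
      have h := ((Complex.continuous_ofReal.tendsto _).comp hA).add
        ((tendsto_const_nhds (x := Complex.I) (f := Filter.atTop)).mul
          ((Complex.continuous_ofReal.tendsto _).comp hB))
      have hval : ((((4:ℝ)) / 4 : ℝ) : ℂ) + Complex.I * ((((0:ℝ)) / 4 : ℝ) : ℂ) = 1 := by
        norm_num
      rwa [hval] at h
    have hcarc : Filter.Tendsto carccos (nhds 1) (nhds 0) := by
      have h := continuousAt_carccos (z₀ := (1 : ℂ)) (by norm_num)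
      unfold ContinuousAt at h
      rwa [carccos_one] at h
    exact hcarc.comp hPT

/-- An 8: for `x, y` linearly independent over `ℝ`, the map
`Θ(t) = ∠(x, y + t·x)` is continuous and injective, with limits `π` at `−∞` and `0` at `+∞`. -/
theorem stmt11 {X : Type*} [NormedAddCommGroup X] [NormedSpace ℂ X] (x y : X)
    (hind : LinearIndependent ℝ ![x, y]) :
    Continuous (fun t : ℝ => cangle x (y + (t : ℂ) • x)) ∧
    Function.Injective (fun t : ℝ => cangle x (y + (t : ℂ) • x)) ∧
    Filter.Tendsto (fun t : ℝ => cangle x (y + (t : ℂ) • x)) Filter.atBot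
      (nhds ((Real.pi : ℝ) : ℂ)) ∧
    Filter.Tendsto (fun t : ℝ => cangle x (y + (t : ℂ) • x)) Filter.atTop (nhds 0) := stmt11' x y hind
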